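/- Let R ∈ ℚ[[g]] be the unique formal power series with constant coefficient 1 satisfying R = 1 + 3gR². The series S = R·(1 − 6gR) has constant coefficient 1, hence is invertible in ℚ[[g]], and the coefficient of g^n in S^{−1} is asymptotically equivalent to 12^n/(2√(π n)) as n → ∞. (S^{−1} equals the specialization at t = 1 of d(ln R)/dt, the generating function of triply pointed quadrangulations plus t^{−1}.) -/

import Mathlib

open PowerSeries Filter

/-- `2 * C(2k+1, k+1) = centralBinom (k+1)` -/
lemma aux_cb_two_mul (k : ℕ) : 2 * (2*k+1).choose (k+1) = Nat.centralBinom (k+1) := by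
  have hsymm : (2*k+1).choose k = (2*k+1).choose (k+1) := by
    have h := Nat.choose_symm (n := 2*k+1) (k := k+1) (by omega)
    have h2 : 2*k+1 - (k+1) = k := by omega
    rw [h2] at h
    exact h
  have h1 : Nat.centralBinom (k+1) = (2*k+1+1).choose (k+1) := by
    unfold Nat.centralBinom; congr 1
  have h3 := Nat.choose_succ_succ (2*k+1) k
  simp only [Nat.succ_eq_add_one] at h3
  omega

/-- key rational identity: `C(2k+3,k+2) + catalan (k+1) = 4 * C(2k+1,k+1)` -/
lemma aux_key_q (k : ℕ) :
    ((2*k+3).choose (k+2) : ℚ) + catalan (k+1) = 4 * (2*k+1).choose (k+1) := by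
  have hA : ((k:ℚ)+2) * catalan (k+1) = Nat.centralBinom (k+1) := by
    have := congrArg (Nat.cast (R := ℚ)) (succ_mul_catalan_eq_centralBinom (k+1))
    push_cast at this
    linarith
  have hB : ((2*(k:ℚ)+3)) * Nat.centralBinom (k+1) = ((2*k+3).choose (k+2) : ℚ) * ((k:ℚ)+2) := by
    have h := Nat.add_one_mul_choose_eq (2*k+2) (k+1)
    have h1 : (2*k+2).choose (k+1) = Nat.centralBinom (k+1) := by
      unfold Nat.centralBinom; congr 1
    rw [h1] at h
    have : ((2*k+2+1) * Nat.centralBinom (k+1) : ℚ) = ((2*k+2+1).choose (k+1+1) : ℚ) * (k+1+1) := by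
      exact_mod_cast congrArg (Nat.cast (R := ℚ)) h
    have e1 : 2*k+2+1 = 2*k+3 := by omega
    have e2 : k+1+1 = k+2 := by omega
    rw [e1, e2] at this
    push_cast at this ⊢
    linarith
  have hC : (2:ℚ) * (2*k+1).choose (k+1) = Nat.centralBinom (k+1) := by
    exact_mod_cast congrArg (Nat.cast (R := ℚ)) (aux_cb_two_mul k)
  have hk2 : ((k:ℚ)+2) ≠ 0 := by positivity
  have expand : (((2*k+3).choose (k+2) : ℚ) + catalan (k+1) - 4 * (2*k+1).choose (k+1)) * ((k:ℚ)+2) = 0 := by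
    linear_combination -hB + hA - 2*((k:ℚ)+2) * hC
  have := mul_eq_zero.mp expand
  rcases this with h | h
  · linarith
  · exact absurd h hk2

open Stirling Real in
lemma aux_stirling_pos (k : ℕ) (hk : 1 ≤ k) : 0 < stirlingSeq k := by
  obtain ⟨m, rfl⟩ : ∃ m, k = m + 1 := ⟨k - 1, by omega⟩
  exact stirlingSeq'_pos m

open Stirling Real in
lemma aux_cb_eq (n : ℕ) (hn : 1 ≤ n) :
    (Nat.centralBinom n : ℝ) * Real.sqrt (Real.pi * n) / 4 ^ n
      = stirlingSeq (2*n) / (stirlingSeq n)^2 * Real.sqrt Real.pi := by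
  have hn0 : (0:ℝ) < n := by exact_mod_cast hn
  have ha : 0 < stirlingSeq n := aux_stirling_pos n hn
  have hb : 0 < stirlingSeq (2*n) := aux_stirling_pos (2*n) (by omega)
  set a := stirlingSeq n with ha'
  set b := stirlingSeq (2*n) with hb'
  set s := Real.sqrt n with hs'
  set p := ((n:ℝ)/Real.exp 1)^n with hp'
  have hs : 0 < s := Real.sqrt_pos.2 hn0
  have hp : 0 < p := by positivity
  have hs2 : s^2 = (n:ℝ) := Real.sq_sqrt hn0.le
  have h2 : (Real.sqrt 2)^2 = 2 := Real.sq_sqrt (by norm_num)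
  have hc : ((2*n : ℕ) : ℝ) = 2*(n:ℝ) := by push_cast; ring
  have hfn : ((Nat.factorial n : ℕ) : ℝ) = a * (Real.sqrt 2 * s * p) := by
    rw [ha', stirlingSeq, Real.sqrt_mul (by norm_num : (0:ℝ) ≤ 2), ← hs', ← hp']
    field_simp
  have hf2n : ((Nat.factorial (2*n) : ℕ) : ℝ) = b * (2 * s * (4^n * p^2)) := by
    rw [hb', stirlingSeq]
    have e1 : Real.sqrt (2 * ((2*n : ℕ):ℝ)) = 2 * s := by
      rw [hc, show (2:ℝ) * (2*(n:ℝ)) = 4 * n by ring,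
        Real.sqrt_mul (by norm_num : (0:ℝ) ≤ 4), ← hs',
        show (4:ℝ) = 2^2 by norm_num, Real.sqrt_sq (by norm_num : (0:ℝ) ≤ 2)]
    have e2 : (((2*n : ℕ):ℝ)/Real.exp 1)^(2*n) = 4^n * p^2 := by
      rw [hc, show (2*(n:ℝ))/Real.exp 1 = 2 * ((n:ℝ)/Real.exp 1) by ring, mul_pow, hp',
        show (2:ℝ)^(2*n) = 4^n by rw [pow_mul]; norm_num,
        ← pow_mul, mul_comm n 2, pow_mul]
    rw [e1, e2]
    field_simp
  have hcb : ((Nat.factorial (2*n) : ℕ) : ℝ)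
      = (Nat.centralBinom n : ℝ) * (Nat.factorial n : ℝ) * (Nat.factorial n : ℝ) := by
    have h := Nat.choose_mul_factorial_mul_factorial (show n ≤ 2*n by omega)
    have e : 2*n - n = n := by omega
    rw [e] at h
    have h' : Nat.centralBinom n * Nat.factorial n * Nat.factorial n = Nat.factorial (2*n) := h
    exact_mod_cast (congrArg (Nat.cast (R := ℝ)) h').symm
  set CB := (Nat.centralBinom n : ℝ)
  have h : b * (2 * s * (4^n * p^2))
      = CB * (a * (Real.sqrt 2 * s * p)) * (a * (Real.sqrt 2 * s * p)) := by
    rw [← hfn, ← hf2n]; exact hcb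
  have hcancel : (2*p^2) * (b * (s*4^n)) = (2*p^2) * (CB * a^2 * n) := by
    linear_combination h + (2*p^2*CB*a^2)*hs2 + (CB*a^2*s^2*p^2)*h2
  have key : b * (s*4^n) = CB * a^2 * n := mul_left_cancel₀ (by positivity) hcancel
  have key' : (n:ℝ) * (b * 4^n) = (n:ℝ) * (CB * a^2 * s) := by
    linear_combination s*key - b*4^n*hs2
  have key'' : b * 4^n = CB * a^2 * s := mul_left_cancel₀ hn0.ne' key'
  have hπs : Real.sqrt (Real.pi * n) = Real.sqrt Real.pi * s :=
    Real.sqrt_mul Real.pi_pos.le _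
  rw [hπs, show b / a^2 * Real.sqrt Real.pi = b * Real.sqrt Real.pi / a^2 by ring,
    div_eq_div_iff (by positivity) (by positivity)]
  linear_combination (-(Real.sqrt Real.pi)) * key''

open Stirling Real in
lemma aux_cb_tendsto :
    Tendsto (fun n : ℕ => (Nat.centralBinom n : ℝ) * Real.sqrt (Real.pi * n) / 4 ^ n)
      atTop (nhds 1) := by
  have h2n : Tendsto (fun n : ℕ => stirlingSeq (2*n)) atTop (nhds (Real.sqrt Real.pi)) :=
    tendsto_stirlingSeq_sqrt_pi.comp
      (tendsto_atTop_mono (fun n => by simp only [id_eq]; omega) tendsto_id)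
  have hden : Tendsto (fun n : ℕ => (stirlingSeq n)^2) atTop (nhds ((Real.sqrt Real.pi)^2)) :=
    tendsto_stirlingSeq_sqrt_pi.pow 2
  have hπ : (Real.sqrt Real.pi)^2 ≠ 0 := by
    rw [Real.sq_sqrt Real.pi_pos.le]; exact Real.pi_ne_zero
  have h : Tendsto (fun n : ℕ => stirlingSeq (2*n) / (stirlingSeq n)^2 * Real.sqrt Real.pi)
      atTop (nhds (Real.sqrt Real.pi / (Real.sqrt Real.pi)^2 * Real.sqrt Real.pi)) :=
    (h2n.div hden hπ).mul_const _
  have hval : Real.sqrt Real.pi / (Real.sqrt Real.pi)^2 * Real.sqrt Real.pi = 1 := by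
    rw [Real.sq_sqrt Real.pi_pos.le, div_mul_eq_mul_div, Real.mul_self_sqrt Real.pi_pos.le,
      div_self Real.pi_ne_zero]
  rw [hval] at h
  refine h.congr' ?_
  filter_upwards [eventually_ge_atTop 1] with n hn
  exact (aux_cb_eq n hn).symm

/-- For the power series `R ∈ ℚ[[g]]` with constant coefficient `1` satisfying
`R = 1 + 3 g R²`, the series `S = R (1 − 6 g R)` has constant coefficient `1` (hence is
invertible), and the coefficient of `gⁿ` in `S⁻¹` is asymptotically equivalent to
`12ⁿ / (2 √(π n))` as `n → ∞`. -/
theorem coeff_inv_S_asymptotics (R : PowerSeries ℚ) (h0 : constantCoeff R = 1)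
    (hR : R = 1 + 3 * X * R ^ 2) :
    constantCoeff (R * (1 - 6 * X * R)) = 1 ∧
    IsUnit (R * (1 - 6 * X * R)) ∧
    Tendsto
      (fun n : ℕ =>
        ((PowerSeries.coeff n (R * (1 - 6 * X * R))⁻¹ : ℚ) : ℝ) /
          (12 ^ n / (2 * Real.sqrt (Real.pi * (n : ℝ)))))
      atTop (nhds 1) := by
  -- coefficients of R are (scaled) Catalan numbers
  have hcoeff : ∀ n, (coeff n) R = 3^n * catalan n := by
    intro n
    induction n using Nat.strong_induction_on with
    | _ n ih =>
      rcases n with _ | m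
      · simp [coeff_zero_eq_constantCoeff, h0]
      · conv_lhs => rw [hR]
        have hrw : (1 : ℚ⟦X⟧) + 3*X*R^2 = 1 + X*(C 3 * (R*R)) := by
          rw [show (C 3 : ℚ⟦X⟧) = 3 from map_ofNat _ 3]; ring
        rw [hrw, map_add, coeff_succ_X_mul, coeff_C_mul, coeff_mul,
          Finset.Nat.sum_antidiagonal_eq_sum_range_succ_mk]
        have hterm : ∀ k ∈ Finset.range (m+1),
            coeff k R * coeff (m-k) R = 3^m * ((catalan k * catalan (m-k) : ℕ) : ℚ) := by
          intro k hk
          simp only [Finset.mem_range] at hk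
          rw [ih k (by omega), ih (m-k) (by omega)]
          push_cast
          rw [mul_mul_mul_comm, ← pow_add, show k + (m-k) = m by omega]
        rw [Finset.sum_congr rfl hterm, ← Finset.mul_sum]
        have hcat : ((catalan (m+1) : ℕ) : ℚ)
            = ∑ k ∈ Finset.range (m+1), ((catalan k * catalan (m-k) : ℕ) : ℚ) := by
          have h := catalan_succ' m
          rw [Finset.Nat.sum_antidiagonal_eq_sum_range_succ_mk] at h
          exact_mod_cast congrArg (Nat.cast (R := ℚ)) h
        rw [coeff_one]
        push_cast
        rw [hcat]
        push_cast
        ring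
  -- the explicit inverse
  set t : ℕ → ℚ := fun n => (3:ℚ)^n * ((2*n-1).choose n : ℚ) with ht
  have key1 : ((1:ℚ⟦X⟧) - 12*X) * PowerSeries.mk t = 1 - 6*X - 3*X*R := by
    have hL : ((1:ℚ⟦X⟧)-12*X) * PowerSeries.mk t = PowerSeries.mk t - X*(C 12 * PowerSeries.mk t) := by
      rw [show (C 12 : ℚ⟦X⟧) = 12 from map_ofNat _ 12]; ring
    have hRr : (1 : ℚ⟦X⟧) - 6*X - 3*X*R = 1 - X*(C 6 + C 3*R) := by
      rw [show (C 6 : ℚ⟦X⟧) = 6 from map_ofNat _ 6,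
        show (C 3 : ℚ⟦X⟧) = 3 from map_ofNat _ 3]; ring
    rw [hL, hRr]
    ext n
    rcases n with _ | n
    · simp [coeff_zero_eq_constantCoeff, ht]
    · rw [map_sub, map_sub, coeff_succ_X_mul, coeff_succ_X_mul, coeff_C_mul, coeff_mk, coeff_mk,
        map_add, coeff_C_mul, coeff_one, coeff_C]
      rcases n with _ | m
      · rw [coeff_zero_eq_constantCoeff, h0]
        norm_num [ht]
      · rw [hcoeff (m+1)]
        simp only [ht]
        rw [show 2*(m+1+1)-1 = 2*m+3 by omega, show 2*(m+1)-1 = 2*m+1 by omega]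
        simp only [Nat.succ_ne_zero, if_false, Nat.add_eq_zero, and_false]
        push_cast
        linear_combination ((3:ℚ)^(m+2)) * aux_key_q m
  have key2 : (R * (1-6*X*R)) * (1 - 6*X - 3*X*R) = 1 - 12*X := by
    linear_combination (1 - 12*X - 6*X*R) * hR
  have h1ne : ((1:ℚ⟦X⟧) - 12*X) ≠ 0 := by
    intro h
    have h' : constantCoeff ((1:ℚ⟦X⟧) - 12*X) = 1 := by simp
    rw [h] at h'
    simp at h'
  have hST : (R*(1-6*X*R)) * PowerSeries.mk t = 1 := by
    refine mul_left_cancel₀ h1ne ?_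
    rw [mul_one, show ((1:ℚ⟦X⟧)-12*X) * ((R*(1-6*X*R)) * PowerSeries.mk t)
      = (R*(1-6*X*R)) * (((1:ℚ⟦X⟧)-12*X) * PowerSeries.mk t) by ring, key1, key2]
  have hC1 : constantCoeff (R * (1 - 6 * X * R)) = 1 := by
    simp [h0]
  refine ⟨hC1, IsUnit.of_mul_eq_one _ hST, ?_⟩
  have hinv : (R * (1 - 6 * X * R))⁻¹ = PowerSeries.mk t :=
    (PowerSeries.inv_eq_iff_mul_eq_one (by rw [hC1]; norm_num)).mpr
      (by rw [mul_comm]; exact hST)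
  simp only [hinv, coeff_mk, ht]
  refine aux_cb_tendsto.congr' ?_
  filter_upwards [eventually_ge_atTop 1] with n hn
  obtain ⟨k, rfl⟩ : ∃ k, n = k+1 := ⟨n-1, by omega⟩
  rw [show 2*(k+1)-1 = 2*k+1 by omega]
  have hcb : (Nat.centralBinom (k+1) : ℝ) = 2 * ((2*k+1).choose (k+1) : ℝ) := by
    exact_mod_cast congrArg (Nat.cast (R := ℝ)) (aux_cb_two_mul k).symm
  rw [hcb]
  have hsπ : (0:ℝ) < Real.sqrt (Real.pi * ((k+1 : ℕ):ℝ)) := by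
    apply Real.sqrt_pos.2
    have : (0:ℝ) < ((k+1:ℕ):ℝ) := by positivity
    positivity
  have h12 : (12:ℝ)^(k+1) = 3^(k+1) * 4^(k+1) := by rw [← mul_pow]; norm_num
  push_cast
  push_cast at hsπ
  rw [div_div_eq_mul_div, div_eq_div_iff (by positivity) (by positivity), h12]
  ring
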